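/- For every positive integer n, ∑_{k=1}^{n} C(n,k) (−1)^{k+1} · k/(n+1−k) = (−1)^{n+1}, where C(n,k) denotes the binomial coefficient. -/

import Mathlib

open Finset

/-- **Binomial identity (3.1).** For every positive integer `n`,
`∑_{k=1}^n C(n,k) (-1)^{k+1} k/(n+1-k) = (-1)^{n+1}`. -/
theorem sum_choose_mul_div_eq_neg_one_pow (n : ℕ) (hn : 0 < n) :
    ∑ k ∈ Finset.Icc 1 n,
        (n.choose k : ℝ) * (-1) ^ (k + 1) * k / ((n : ℝ) + 1 - k) =
      (-1) ^ (n + 1) := by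
  have key : ∀ k ∈ Finset.Icc 1 n,
      (n.choose k : ℝ) * (-1) ^ (k + 1) * k / ((n : ℝ) + 1 - k)
        = (-1) ^ (k + 1) * (n.choose (k - 1) : ℝ) := by
    intro k hk
    simp only [Finset.mem_Icc] at hk
    obtain ⟨h1, h2⟩ := hk
    have hkr : (k : ℝ) ≤ n := by exact_mod_cast h2
    have hne : (n : ℝ) + 1 - k ≠ 0 := by linarith
    have hnat : n.choose k * k = n.choose (k - 1) * (n + 1 - k) := by
      obtain ⟨m, rfl⟩ : ∃ m, k = m + 1 := ⟨k - 1, by omega⟩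
      simp [Nat.choose_succ_right_eq n m]
    have hcast : (n.choose k : ℝ) * k = (n.choose (k - 1) : ℝ) * ((n : ℝ) + 1 - k) := by
      have := congrArg (fun m : ℕ => (m : ℝ)) hnat
      push_cast [Nat.cast_sub (by omega : k ≤ n + 1)] at this
      linarith [this]
    rw [div_eq_iff hne]
    linear_combination (-1 : ℝ) ^ (k + 1) * hcast
  rw [Finset.sum_congr rfl key]
  rw [← Finset.Ico_add_one_right_eq_Icc, Finset.sum_Ico_eq_sum_range]
  have hsimp : ∀ j ∈ Finset.range (n + 1 - 1),
      (-1 : ℝ) ^ (1 + j + 1) * (n.choose (1 + j - 1) : ℝ)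
        = (-1) ^ j * (n.choose j : ℝ) := by
    intro j _
    rw [show 1 + j - 1 = j by omega, show 1 + j + 1 = j + 2 by ring, pow_add]
    ring
  rw [Finset.sum_congr rfl hsimp]
  have halt : ∑ i ∈ Finset.range (n + 1), (-1 : ℝ) ^ i * (n.choose i : ℝ) = 0 := by
    have := Int.alternating_sum_range_choose_of_ne (by omega : n ≠ 0)
    have : ((∑ i ∈ Finset.range (n + 1), (-1 : ℤ) ^ i * (n.choose i) : ℤ) : ℝ) = 0 := by
      rw [this]; simp
    push_cast at this
    convert this using 2
  have hsplit := Finset.sum_range_succ (fun i => (-1 : ℝ) ^ i * (n.choose i : ℝ)) n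
  rw [halt] at hsplit
  have : ∑ i ∈ Finset.range n, (-1 : ℝ) ^ i * (n.choose i : ℝ)
      = -((-1) ^ n * (n.choose n : ℝ)) := by linarith
  rw [show n + 1 - 1 = n by omega, this]
  simp [pow_succ]
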